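/- In any induced 4-cycle of a shortest path graph, the multiset of difference indices of the four edges consists of exactly two distinct values, and these values alternate around the cycle: opposite edges of the 4-cycle have equal difference indices and consecutive edges have distinct difference indices. -/

import Mathlib

open SimpleGraph

variable {V : Type*}

/-- An `(a,b)`-geodesic in `G`: a shortest path from `a` to `b`. -/
def Geodesic (G : SimpleGraph V) (a b : V) : Type _ :=
  {p : G.Walk a b // p.IsPath ∧ p.length = G.dist a b}

/-- The set of index levels at which two geodesics differ
(position `i` in the support list is index level `i`; position `0` is `a`). -/
def diffIndices (G : SimpleGraph V) (a b : V) (U W : Geodesic G a b) : Set ℕ :=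
  {i | U.1.support[i]? ≠ W.1.support[i]?}

/-- The shortest path graph `S(G,a,b)`: vertices are the `(a,b)`-geodesics,
two geodesics being adjacent iff they differ at exactly one index level. -/
def SPG (G : SimpleGraph V) (a b : V) : SimpleGraph (Geodesic G a b) where
  Adj U W := ∃! i, i ∈ diffIndices G a b U W
  symm := by
    constructor
    rintro U W ⟨i, hi, hu⟩
    exact ⟨i, Ne.symm hi, fun j hj => hu j (Ne.symm hj)⟩
  loopless := by
    constructor
    rintro U ⟨i, hi, -⟩
    exact hi rfl

theorem walk_support_inj {V : Type*} {G : SimpleGraph V} {a b : V} (p q : G.Walk a b)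
    (h : p.support = q.support) : p = q := by
  induction p with
  | nil =>
    cases q with
    | nil => rfl
    | cons h' q' => simpa using congrArg List.length h
  | cons hadj p' ih =>
    cases q with
    | nil => simpa using congrArg List.length h
    | cons hadj' q' =>
      rw [SimpleGraph.Walk.support_cons, SimpleGraph.Walk.support_cons] at h
      have h2 := (List.cons.inj h).2
      have hc : p'.support.head? = q'.support.head? := congrArg List.head? h2
      rw [SimpleGraph.Walk.support_eq_cons p', SimpleGraph.Walk.support_eq_cons q',
        List.head?_cons, List.head?_cons] at hc
      obtain rfl : _ = _ := Option.some.inj hc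
      rw [ih _ h2]

theorem diffIndices_symm (G : SimpleGraph V) (a b : V) (U W : Geodesic G a b) :
    diffIndices G a b U W = diffIndices G a b W U :=
  Set.ext fun _ => ne_comm

theorem diffIndices_nonempty (G : SimpleGraph V) (a b : V) {U W : Geodesic G a b}
    (h : U ≠ W) : (diffIndices G a b U W).Nonempty := by
  by_contra hne
  rw [Set.not_nonempty_iff_eq_empty] at hne
  apply h
  apply Subtype.ext
  apply walk_support_inj
  apply List.ext_getElem?
  intro i
  by_contra hi
  exact absurd (Set.eq_empty_iff_forall_notMem.mp hne i) (by simpa [diffIndices] using hi)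

theorem diffIndices_triangle (G : SimpleGraph V) (a b : V) (U X W : Geodesic G a b) :
    diffIndices G a b U W ⊆ diffIndices G a b U X ∪ diffIndices G a b X W := by
  intro i hi
  by_contra hmem
  rw [Set.mem_union] at hmem
  push_neg at hmem
  simp only [diffIndices, Set.mem_setOf_eq, not_not] at hmem hi ⊢
  exact hi (hmem.1.trans hmem.2)

theorem adj_diff_singleton (G : SimpleGraph V) (a b : V) {U W : Geodesic G a b}
    (h : (SPG G a b).Adj U W) : ∃ i, diffIndices G a b U W = {i} := by
  obtain ⟨i, hi, hu⟩ := h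
  exact ⟨i, Set.eq_singleton_iff_unique_mem.mpr ⟨hi, hu⟩⟩

theorem two_mem_of_not_adj (G : SimpleGraph V) (a b : V) {U W : Geodesic G a b}
    (hne : U ≠ W) (h : ¬ (SPG G a b).Adj U W) :
    ∃ x y, x ∈ diffIndices G a b U W ∧ y ∈ diffIndices G a b U W ∧ x ≠ y := by
  obtain ⟨x, hx⟩ := diffIndices_nonempty G a b hne
  change ¬ ∃! i, i ∈ diffIndices G a b U W at h
  rw [ExistsUnique] at h
  push_neg at h
  obtain ⟨y, hy, hxy⟩ := h x hx
  exact ⟨x, y, hx, hy, fun e => hxy e.symm⟩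

/-- difference indices alternate around an induced 4-cycle. -/
theorem stmt_8 {V : Type*} (G : SimpleGraph V) (a b : V) (hab : a ≠ b)
    (U₀ U₁ U₂ U₃ : Geodesic G a b) (h02 : U₀ ≠ U₂) (h13 : U₁ ≠ U₃)
    (e01 : (SPG G a b).Adj U₀ U₁) (e12 : (SPG G a b).Adj U₁ U₂)
    (e23 : (SPG G a b).Adj U₂ U₃) (e30 : (SPG G a b).Adj U₃ U₀)
    (n02 : ¬ (SPG G a b).Adj U₀ U₂) (n13 : ¬ (SPG G a b).Adj U₁ U₃) :
    ∃ i j : ℕ, i ≠ j ∧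
      diffIndices G a b U₀ U₁ = {i} ∧ diffIndices G a b U₁ U₂ = {j} ∧
      diffIndices G a b U₂ U₃ = {i} ∧ diffIndices G a b U₃ U₀ = {j} := by
  obtain ⟨i₀, d01⟩ := adj_diff_singleton G a b e01
  obtain ⟨i₁, d12⟩ := adj_diff_singleton G a b e12
  obtain ⟨i₂, d23⟩ := adj_diff_singleton G a b e23
  obtain ⟨i₃, d30⟩ := adj_diff_singleton G a b e30
  obtain ⟨x, y, hx, hy, hxy⟩ := two_mem_of_not_adj G a b h02 n02
  obtain ⟨x', y', hx', hy', hxy'⟩ := two_mem_of_not_adj G a b h13 n13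
  -- diff02 ⊆ {i₀, i₁}
  have sub1 : diffIndices G a b U₀ U₂ ⊆ {i₀} ∪ {i₁} := by
    have := diffIndices_triangle G a b U₀ U₁ U₂
    rwa [d01, d12] at this
  -- diff02 ⊆ {i₃, i₂}
  have sub2 : diffIndices G a b U₀ U₂ ⊆ {i₃} ∪ {i₂} := by
    have := diffIndices_triangle G a b U₀ U₃ U₂
    rwa [diffIndices_symm G a b U₀ U₃, d30, diffIndices_symm G a b U₃ U₂, d23] at this
  -- diff13 ⊆ {i₁, i₂}
  have sub3 : diffIndices G a b U₁ U₃ ⊆ {i₁} ∪ {i₂} := by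
    have := diffIndices_triangle G a b U₁ U₂ U₃
    rwa [d12, d23] at this
  -- diff13 ⊆ {i₀, i₃}
  have sub4 : diffIndices G a b U₁ U₃ ⊆ {i₀} ∪ {i₃} := by
    have := diffIndices_triangle G a b U₁ U₀ U₃
    rwa [diffIndices_symm G a b U₁ U₀, d01, diffIndices_symm G a b U₀ U₃, d30] at this
  have m1 : x = i₁ ∨ x = i₀ := by simpa using sub1 hx
  have m2 : y = i₁ ∨ y = i₀ := by simpa using sub1 hy
  have m3 : x = i₂ ∨ x = i₃ := by simpa using sub2 hx
  have m4 : y = i₂ ∨ y = i₃ := by simpa using sub2 hy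
  have m5 : x' = i₂ ∨ x' = i₁ := by simpa using sub3 hx'
  have m6 : y' = i₂ ∨ y' = i₁ := by simpa using sub3 hy'
  have m7 : x' = i₃ ∨ x' = i₀ := by simpa using sub4 hx'
  have m8 : y' = i₃ ∨ y' = i₀ := by simpa using sub4 hy'
  have h1 : i₀ = i₂ := by omega
  have h2 : i₁ = i₃ := by omega
  have h3 : i₀ ≠ i₁ := by omega
  exact ⟨i₀, i₁, h3, d01, d12, h1 ▸ d23, h2 ▸ d30⟩
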